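/- Let R be a K-affinoid (or K-dagger) algebra, G = Gal(K̄/K) the absolute Galois group, and R̂ = R ⊗̂_K C where C is the completed algebraic closure of K. Then G acts continuously on R̂ coefficientwise with respect to a K-Schauder basis, and the fixed subring R̂^G equals R. -/

import Mathlib

open Polynomial


section Prelim

variable {K : Type*} [NontriviallyNormedField K] [IsUltrametricDist K]

lemma my_norm_nat_coprime {p : ℕ} (hp : p.Prime) (hpK : ‖(p : K)‖ < 1) {m : ℕ}
    (hm : ¬ p ∣ m) : ‖(m : K)‖ = 1 := by
  refine le_antisymm (IsUltrametricDist.norm_natCast_le_one K m) ?_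
  by_contra h
  push_neg at h
  have hg : Nat.gcd p m = 1 := (Nat.Prime.coprime_iff_not_dvd hp).2 hm
  have hb := Nat.gcd_eq_gcd_ab p m
  rw [hg] at hb
  have hbK : (1 : K) = (p : K) * ((Nat.gcdA p m : ℤ) : K) + (m : K) * ((Nat.gcdB p m : ℤ) : K) := by
    have := congrArg (fun z : ℤ => (z : K)) hb
    push_cast at this ⊢
    simpa using this
  have h1 : ‖(1 : K)‖ ≤ max (‖(p : K) * ((Nat.gcdA p m : ℤ) : K)‖)
      (‖(m : K) * ((Nat.gcdB p m : ℤ) : K)‖) := by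
    rw [hbK]; exact IsUltrametricDist.norm_add_le_max _ _
  have hA : ‖(p : K) * ((Nat.gcdA p m : ℤ) : K)‖ < 1 := by
    rw [norm_mul]
    calc ‖(p : K)‖ * ‖((Nat.gcdA p m : ℤ) : K)‖ ≤ ‖(p : K)‖ * 1 :=
          mul_le_mul_of_nonneg_left (IsUltrametricDist.norm_intCast_le_one K _) (norm_nonneg _)
    _ < 1 := by simpa using hpK
  have hB : ‖(m : K) * ((Nat.gcdB p m : ℤ) : K)‖ < 1 := by
    rw [norm_mul]
    calc ‖(m : K)‖ * ‖((Nat.gcdB p m : ℤ) : K)‖ ≤ ‖(m : K)‖ * 1 :=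
          mul_le_mul_of_nonneg_left (IsUltrametricDist.norm_intCast_le_one K _) (norm_nonneg _)
    _ < 1 := by simpa using h
  rw [norm_one] at h1
  have := max_lt hA hB
  linarith

lemma my_norm_natCast_eq {p : ℕ} (hp : p.Prime) (hpK : ‖(p : K)‖ < 1) {m : ℕ} (hm : m ≠ 0) :
    ‖(m : K)‖ = ‖(p : K)‖ ^ (m.factorization p) := by
  conv_lhs => rw [← Nat.ordProj_mul_ordCompl_eq_self m p]
  push_cast
  rw [norm_mul, norm_pow, my_norm_nat_coprime hp hpK (Nat.not_dvd_ordCompl hp hm), mul_one]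

/-- if `u^j ≤ M * v^j` for all `j ≥ 1` then `u ≤ v` (for nonneg reals). -/
lemma my_le_of_pow_le_mul {u v M : ℝ} (hu : 0 ≤ u) (hv : 0 ≤ v) (hM : 0 < M)
    (h : ∀ j : ℕ, u ^ j ≤ M * v ^ j) : u ≤ v := by
  by_contra hlt
  push_neg at hlt
  rcases eq_or_lt_of_le hv with rfl | hv'
  · have h1 := h 1
    simp at h1
    nlinarith
  · have hq : 1 < u / v := (one_lt_div hv').2 hlt
    obtain ⟨n, hn⟩ := pow_unbounded_of_one_lt M hq
    have := h n
    have hvn : 0 < v ^ n := pow_pos hv' n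
    rw [div_pow, lt_div_iff₀ hvn] at hn
    linarith

end Prelim
section Iso

open IntermediateField

variable {K C : Type*} [NontriviallyNormedField K] [CompleteSpace K]
  [NontriviallyNormedField C] [NormedAlgebra K C]

lemma my_algHom_norm_le
    (ψ : algebraicClosure K C →ₐ[K] algebraicClosure K C) (z : algebraicClosure K C) :
    ‖(ψ z : C)‖ ≤ ‖(z : C)‖ := by
  have hzint : IsIntegral K (z : C) := mem_algebraicClosure_iff'.mp z.2
  set S : Subalgebra K C := Algebra.adjoin K {(z : C)} with hS
  have hfg : S.toSubmodule.FG := hzint.fg_adjoin_singleton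
  haveI : Module.Finite K S.toSubmodule := Module.Finite.iff_fg.mpr hfg
  have hmem : ∀ y : S.toSubmodule, (y : C) ∈ algebraicClosure K C := by
    intro y
    exact mem_algebraicClosure_iff'.mpr (IsIntegral.of_mem_of_fg S hfg _ y.2)
  let g : S.toSubmodule →ₗ[K] algebraicClosure K C :=
    { toFun := fun y => ⟨(y : C), hmem y⟩
      map_add' := fun a b => Subtype.ext rfl
      map_smul' := fun a b => Subtype.ext rfl }
  let φ : S.toSubmodule →ₗ[K] C :=
    ((algebraicClosure K C).val.toLinearMap.comp ψ.toLinearMap).comp g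
  let φL := LinearMap.toContinuousLinearMap φ
  have hb : ∀ j : ℕ, ‖(ψ z : C)‖ ^ j ≤ ‖φL‖ * ‖(z : C)‖ ^ j := by
    intro j
    have hmemS : (z : C) ^ j ∈ S.toSubmodule :=
      pow_mem (Algebra.subset_adjoin (Set.mem_singleton _)) j
    have e : (⟨(z : C) ^ j, hmem ⟨_, hmemS⟩⟩ : algebraicClosure K C) = z ^ j := by
      ext; push_cast; rfl
    have h1 : φL ⟨(z : C) ^ j, hmemS⟩ = (ψ z : C) ^ j := by
      show ((ψ ⟨(z : C) ^ j, hmem ⟨_, hmemS⟩⟩ : algebraicClosure K C) : C) = (ψ z : C) ^ j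
      rw [e, map_pow]
      push_cast; rfl
    have h2 := φL.le_opNorm ⟨(z : C) ^ j, hmemS⟩
    rw [h1] at h2
    have h3 : ‖(⟨(z : C) ^ j, hmemS⟩ : S.toSubmodule)‖ = ‖(z : C)‖ ^ j := by
      rw [show ‖(⟨(z : C) ^ j, hmemS⟩ : S.toSubmodule)‖ = ‖(z : C) ^ j‖ from rfl, norm_pow]
    rw [h3, ← norm_pow] at h2
    rw [← norm_pow, ← norm_pow]
    exact h2
  refine my_le_of_pow_le_mul (norm_nonneg _) (norm_nonneg _)
    (lt_of_lt_of_le zero_lt_one (le_max_right ‖φL‖ 1)) ?_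
  intro j
  exact (hb j).trans (mul_le_mul_of_nonneg_right (le_max_left _ _) (by positivity))

lemma my_algEquiv_norm_eq
    (τ : algebraicClosure K C ≃ₐ[K] algebraicClosure K C) (z : algebraicClosure K C) :
    ‖(τ z : C)‖ = ‖(z : C)‖ := by
  refine le_antisymm (my_algHom_norm_le τ.toAlgHom z) ?_
  have := my_algHom_norm_le (C := C) τ.symm.toAlgHom (τ z)
  simpa using this

end Iso
set_option synthInstance.maxHeartbeats 200000 in
theorem my_dummy_nothing : True := trivial

section Extend

set_option synthInstance.maxHeartbeats 200000
set_option maxHeartbeats 1000000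

open IntermediateField

variable {K C : Type*} [NontriviallyNormedField K] [CompleteSpace K]
  [NontriviallyNormedField C] [NormedAlgebra K C] [CompleteSpace C]

lemma my_dense_range (halg : Dense {x : C | IsAlgebraic K x}) :
    DenseRange ((↑) : algebraicClosure K C → C) := by
  have h : Set.range ((↑) : algebraicClosure K C → C) = {x : C | IsAlgebraic K x} := by
    rw [Subtype.range_coe]
    ext x
    exact ⟨fun hx => mem_algebraicClosure_iff.mp hx, fun hx => mem_algebraicClosure_iff.mpr hx⟩
  rw [DenseRange, h]
  exact halg

lemma my_extend_aut (halg : Dense {x : C | IsAlgebraic K x})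
    (τ : algebraicClosure K C ≃ₐ[K] algebraicClosure K C) :
    ∃ σ : C ≃ₐ[K] C, Isometry ⇑σ ∧ ∀ z : algebraicClosure K C, σ ↑z = ↑(τ z) := by
  letI A := algebraicClosure K C
  let j : algebraicClosure K C → C := (↑)
  have hjd : DenseRange j := my_dense_range halg
  have hj_iso : Isometry j := isometry_subtype_coe
  have hj_ui : IsUniformInducing j := hj_iso.isUniformInducing
  have di : IsDenseInducing j := hj_ui.isDenseInducing hjd
  -- the isometric lift of an automorphism
  have key : ∀ υ : A ≃ₐ[K] A, Isometry (fun z : A => (υ z : C)) := by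
    intro υ
    refine Isometry.of_dist_eq fun z z' => ?_
    rw [Subtype.dist_eq, dist_eq_norm, dist_eq_norm]
    have : (υ z : C) - (υ z' : C) = ((υ (z - z') : A) : C) := by
      rw [map_sub]; rfl
    rw [this, my_algEquiv_norm_eq]
    rfl
  have huc : ∀ υ : A ≃ₐ[K] A, UniformContinuous (fun z : A => (υ z : C)) :=
    fun υ => (key υ).uniformContinuous
  let ext : (A ≃ₐ[K] A) → C → C := fun υ => di.extend (fun z : A => (υ z : C))
  have hext_cont : ∀ υ, Continuous (ext υ) :=
    fun υ => (uniformContinuous_uniformly_extend hj_ui hjd (huc υ)).continuous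
  have hext_eq : ∀ υ (z : A), ext υ (j z) = ((υ z : A) : C) :=
    fun υ z => di.extend_eq ((huc υ).continuous) z
  -- algebraic identities by density
  have hcomp : ∀ υ₁ υ₂ : A ≃ₐ[K] A, ∀ x : C, ext υ₁ (ext υ₂ x) = ext (υ₂.trans υ₁) x := by
    intro υ₁ υ₂
    have h := Continuous.ext_on hjd (((hext_cont υ₁).comp (hext_cont υ₂)))
      (hext_cont (υ₂.trans υ₁)) ?_
    · exact fun x => congrFun h x
    · rintro x ⟨z, rfl⟩
      show ext υ₁ (ext υ₂ (j z)) = ext (υ₂.trans υ₁) (j z)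
      rw [hext_eq, hext_eq, hext_eq]
      rfl
  have hid : ∀ x : C, ext AlgEquiv.refl x = x := by
    have h := Continuous.ext_on hjd (hext_cont AlgEquiv.refl) continuous_id ?_
    · exact fun x => congrFun h x
    · rintro x ⟨z, rfl⟩
      rw [hext_eq]
      rfl
  have hadd : ∀ x y : C, ext τ (x + y) = ext τ x + ext τ y := by
    have h := Continuous.ext_on (hjd.prodMap hjd)
      (f := fun q : C × C => ext τ (q.1 + q.2))
      (g := fun q : C × C => ext τ q.1 + ext τ q.2)
      ((hext_cont τ).comp (continuous_add))
      (((hext_cont τ).comp continuous_fst).add ((hext_cont τ).comp continuous_snd)) ?_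
    · exact fun x y => congrFun h (x, y)
    · rintro q ⟨⟨z, z'⟩, rfl⟩
      show ext τ (j z + j z') = ext τ (j z) + ext τ (j z')
      have : j z + j z' = j (z + z') := rfl
      rw [this, hext_eq, hext_eq, hext_eq, map_add]
      rfl
  have hmul : ∀ x y : C, ext τ (x * y) = ext τ x * ext τ y := by
    have h := Continuous.ext_on (hjd.prodMap hjd)
      (f := fun q : C × C => ext τ (q.1 * q.2))
      (g := fun q : C × C => ext τ q.1 * ext τ q.2)
      ((hext_cont τ).comp (continuous_mul))
      (((hext_cont τ).comp continuous_fst).mul ((hext_cont τ).comp continuous_snd)) ?_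
    · exact fun x y => congrFun h (x, y)
    · rintro q ⟨⟨z, z'⟩, rfl⟩
      show ext τ (j z * j z') = ext τ (j z) * ext τ (j z')
      have : j z * j z' = j (z * z') := rfl
      rw [this, hext_eq, hext_eq, hext_eq, map_mul]
      rfl
  have hcommK : ∀ a : K, ext τ (algebraMap K C a) = algebraMap K C a := by
    intro a
    have h1 : algebraMap K C a = j (algebraMap K A a) := by
      simp [j, IntermediateField.algebraMap_apply]
    rw [h1, hext_eq, AlgEquiv.commutes]
  have hiso : Isometry (ext τ) := by
    have h := Continuous.ext_on (hjd.prodMap hjd)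
      (f := fun q : C × C => dist (ext τ q.1) (ext τ q.2))
      (g := fun q : C × C => dist q.1 q.2)
      (Continuous.dist ((hext_cont τ).comp continuous_fst) ((hext_cont τ).comp continuous_snd))
      continuous_dist ?_
    · exact Isometry.of_dist_eq fun x y => congrFun h (x, y)
    · rintro q ⟨⟨z, z'⟩, rfl⟩
      show dist (ext τ (j z)) (ext τ (j z')) = dist (j z) (j z')
      rw [hext_eq, hext_eq, (key τ).dist_eq, hj_iso.dist_eq]
  refine ⟨{ toFun := ext τ
            invFun := ext τ.symm
            left_inv := fun x => by
              rw [hcomp, show τ.trans τ.symm = AlgEquiv.refl from by ext z; simp, hid]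
            right_inv := fun x => by
              rw [hcomp, show τ.symm.trans τ = AlgEquiv.refl from by ext z; simp, hid]
            map_mul' := hmul
            map_add' := hadd
            commutes' := hcommK }, hiso, fun z => hext_eq τ z⟩

end Extend
section Conj

open IntermediateField

variable {K C : Type*} [NontriviallyNormedField K] [CompleteSpace K]
  [NontriviallyNormedField C] [NormedAlgebra K C] [CompleteSpace C] [IsAlgClosed C]

lemma my_exists_conj (halg : Dense {x : C | IsAlgebraic K x}) {x y : C}
    (hx : IsIntegral K x) (hy : Polynomial.aeval y (minpoly K x) = 0) :
    ∃ σ : C ≃ₐ[K] C, Isometry ⇑σ ∧ σ x = y := by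
  have hyint : IsIntegral K y :=
    isAlgebraic_iff_isIntegral.mp ⟨minpoly K x, minpoly.ne_zero hx, hy⟩
  let x' : algebraicClosure K C := ⟨x, mem_algebraicClosure_iff'.mpr hx⟩
  let y' : algebraicClosure K C := ⟨y, mem_algebraicClosure_iff'.mpr hyint⟩
  have hinj : Function.Injective (algebraMap (algebraicClosure K C) C) :=
    (algebraMap (algebraicClosure K C) C).injective
  have hxx : minpoly K x = minpoly K x' := by
    have := minpoly.algebraMap_eq (A := K) (B := ↥(algebraicClosure K C)) (B' := C) hinj x'
    rw [← this]
    rfl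
  have h_ev : Polynomial.aeval y' (minpoly K x') = 0 := by
    apply hinj
    rw [map_zero]
    have h2 := Polynomial.aeval_algHom_apply (algebraicClosure K C).val y' (minpoly K x')
    show (algebraicClosure K C).val (Polynomial.aeval y' (minpoly K x')) = 0
    rw [← h2]
    show Polynomial.aeval y (minpoly K x') = 0
    rw [← hxx]
    exact hy
  have halgx' : IsAlgebraic K x' := Algebra.IsAlgebraic.isAlgebraic x'
  obtain ⟨τ, hτ⟩ := minpoly.exists_algEquiv_of_root' halgx' h_ev
  obtain ⟨σ, hσiso, hσ⟩ := my_extend_aut halg τ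
  refine ⟨σ, hσiso, ?_⟩
  have : σ x = ((τ x' : algebraicClosure K C) : C) := hσ x'
  rw [this, hτ]

end Conj

section AxStep


variable {K C : Type*} [NontriviallyNormedField K] [CompleteSpace K] [CharZero K]
  [NontriviallyNormedField C] [NormedAlgebra K C] [CompleteSpace C] [IsAlgClosed C]

lemma my_multiset_prod_norm (t : Multiset C) : ‖t.prod‖ = (t.map fun z => ‖z‖).prod := by
  induction t using Multiset.induction_on with
  | empty => simp
  | cons a s ih => simp [norm_mul, ih]

lemma my_multiset_prod_norm_le {ε : ℝ} (hε : 0 ≤ ε) (s : Multiset C)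
    (h : ∀ z ∈ s, ‖z‖ ≤ ε) : ‖s.prod‖ ≤ ε ^ Multiset.card s := by
  induction s using Multiset.induction_on with
  | empty => simp
  | cons a s ih =>
    rw [Multiset.prod_cons, Multiset.card_cons, norm_mul, pow_succ']
    exact mul_le_mul (h a (Multiset.mem_cons_self a s))
      (ih fun z hz => h z (Multiset.mem_cons_of_mem hz)) (norm_nonneg _) hε

lemma my_exists_pow_le_prod (s : Multiset ℝ) (hs : s ≠ 0) (h0 : ∀ x ∈ s, 0 ≤ x) :
    ∃ x ∈ s, x ^ Multiset.card s ≤ s.prod := by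
  induction s using Multiset.induction_on with
  | empty => exact absurd rfl hs
  | cons a t ih =>
    have ha0 : 0 ≤ a := h0 a (Multiset.mem_cons_self a t)
    have ht0 : ∀ x ∈ t, 0 ≤ x := fun x hx => h0 x (Multiset.mem_cons_of_mem hx)
    have htprod : 0 ≤ t.prod := Multiset.prod_nonneg ht0
    rcases eq_or_ne t 0 with rfl | ht
    · exact ⟨a, Multiset.mem_cons_self a 0, by simp⟩
    · obtain ⟨y, hy, hyp⟩ := ih ht ht0
      have hy0 : 0 ≤ y := ht0 y hy
      rcases le_total a y with hle | hle
      · refine ⟨a, Multiset.mem_cons_self a t, ?_⟩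
        rw [Multiset.card_cons, Multiset.prod_cons, pow_succ']
        exact mul_le_mul_of_nonneg_left
          ((pow_le_pow_left₀ ha0 hle _).trans hyp) ha0
      · refine ⟨y, Multiset.mem_cons_of_mem hy, ?_⟩
        rw [Multiset.card_cons, Multiset.prod_cons, pow_succ']
        exact mul_le_mul hle hyp (pow_nonneg hy0 _) ha0

lemma my_esymm_norm_le [IsUltrametricDist C] {ε : ℝ} (hε : 0 ≤ ε) (s : Multiset C)
    (h : ∀ z ∈ s, ‖z‖ ≤ ε) (k : ℕ) : ‖s.esymm k‖ ≤ ε ^ k := by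
  rw [Multiset.esymm]
  obtain ⟨i, hi, hle⟩ :=
    IsUltrametricDist.exists_norm_multiset_sum_le (s.powersetCard k) (f := Multiset.prod)
  rcases eq_or_ne (s.powersetCard k) 0 with h0 | hne
  · rw [h0]
    simpa using pow_nonneg hε k
  · obtain ⟨hsub, hcard⟩ := Multiset.mem_powersetCard.mp (hi hne)
    refine hle.trans ?_
    calc ‖i.prod‖ ≤ ε ^ Multiset.card i :=
          my_multiset_prod_norm_le hε i (fun z hz => h z (Multiset.mem_of_le hsub hz))
    _ = ε ^ k := by rw [hcard]

end AxStep
section AxStep2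


variable {K C : Type*} [NontriviallyNormedField K] [CompleteSpace K] [CharZero K]
  [NontriviallyNormedField C] [NormedAlgebra K C] [CompleteSpace C] [IsAlgClosed C]

lemma my_ax_step [IsUltrametricDist C] (hKC : ∀ a : K, ‖algebraMap K C a‖ = ‖a‖)
    {a : C} (ha : IsIntegral K a) {n d : ℕ} (hn : (minpoly K a).natDegree = n)
    (hd1 : 1 ≤ d) (hdn : d < n) {ε : ℝ} (hε : 0 ≤ ε)
    (hroots : ∀ a' : C, Polynomial.aeval a' (minpoly K a) = 0 → ‖a' - a‖ ≤ ε) :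
    ∃ b : C, IsIntegral K b ∧ (minpoly K b).natDegree ≤ d ∧
      ‖(n.choose d : K)‖ * ‖a - b‖ ^ d ≤ ε ^ d := by
  haveI : CharZero C := charZero_of_injective_algebraMap (algebraMap K C).injective
  set f := minpoly K a with hf
  have hf0 : f ≠ 0 := minpoly.ne_zero ha
  set F := f.map (algebraMap K C) with hF
  have hFmonic : F.Monic := (minpoly.monic ha).map _
  have hF0 : F ≠ 0 := hFmonic.ne_zero
  have hFdeg : F.natDegree = n := by
    rw [hF, natDegree_map_eq_of_injective (algebraMap K C).injective]
    exact hn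
  have hsplits : Splits F :=
    IsAlgClosed.splits F
  have hcard : Multiset.card F.roots = n := by
    rw [← hFdeg]; exact splits_iff_card_roots.mp hsplits
  have hFprod : F = (F.roots.map fun r => X - Polynomial.C r).prod :=
    hsplits.eq_prod_roots_of_monic hFmonic
  have hroots' : ∀ r ∈ F.roots, ‖r - a‖ ≤ ε := by
    intro r hr
    refine hroots r ?_
    have h2 : eval r F = 0 := isRoot_of_mem_roots hr
    rw [Polynomial.aeval_def, ← Polynomial.eval_map]
    exact h2
  -- Taylor coefficients are elementary symmetric functions of (root - a)
  have htay : ∀ k : ℕ, k ≤ n → ‖(Polynomial.taylor a F).coeff k‖ ≤ ε ^ (n - k) := by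
    intro k hk
    let t : C[X] →* C[X] :=
      { toFun := ⇑(Polynomial.taylor a)
        map_one' := by simpa using Polynomial.taylor_one (R := C) (r := a)
        map_mul' := Polynomial.taylor_mul a }
    have h1 : Polynomial.taylor a F
        = ((F.roots.map (fun r => r - a)).map fun s => X - Polynomial.C s).prod := by
      conv_lhs => rw [hFprod]
      have h2 : Polynomial.taylor a (F.roots.map fun r => X - Polynomial.C r).prod
          = ((F.roots.map fun r => X - Polynomial.C r).map t).prod :=
        (Multiset.prod_hom _ t).symm
      rw [h2, Multiset.map_map, Multiset.map_map]
      congr 1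
      apply Multiset.map_congr rfl
      intro r _
      show Polynomial.taylor a (X - Polynomial.C r) = X - Polynomial.C (r - a)
      rw [map_sub, Polynomial.taylor_X, Polynomial.taylor_C, Polynomial.C_sub]
      ring
    have hcard2 : Multiset.card (F.roots.map (fun r => r - a)) = n := by
      rw [Multiset.card_map, hcard]
    rw [h1, Multiset.prod_X_sub_C_coeff _ (le_trans hk (le_of_eq hcard2.symm)), hcard2]
    rw [norm_mul, norm_pow, norm_neg, norm_one, one_pow, one_mul]
    refine my_esymm_norm_le hε _ ?_ _
    intro z hz
    obtain ⟨r, hr, rfl⟩ := Multiset.mem_map.mp hz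
    exact hroots' r hr
  -- the Hasse derivative
  set g := Polynomial.hasseDeriv (n - d) f with hg
  set G := Polynomial.hasseDeriv (n - d) F with hG
  have hGg : g.map (algebraMap K C) = G := by
    ext k
    rw [coeff_map, hG, hg, Polynomial.hasseDeriv_coeff, Polynomial.hasseDeriv_coeff,
      coeff_map, map_mul, map_natCast]
  have hF1 : F.coeff n = 1 := by
    have := hFmonic.coeff_natDegree
    rwa [hFdeg] at this
  have hGcoeffd : G.coeff d = (n.choose (n - d) : C) := by
    rw [hG, Polynomial.hasseDeriv_coeff, show d + (n - d) = n by omega, hF1, mul_one]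
  have hchoose_ne : (n.choose (n - d) : C) ≠ 0 :=
    Nat.cast_ne_zero.mpr (Nat.choose_pos (by omega)).ne'
  have hGdeg : G.natDegree = d := by
    refine le_antisymm ?_ (le_natDegree_of_ne_zero (by rw [hGcoeffd]; exact hchoose_ne))
    refine Polynomial.natDegree_le_iff_coeff_eq_zero.mpr fun m hm => ?_
    rw [hG, Polynomial.hasseDeriv_coeff]
    have : F.coeff (m + (n - d)) = 0 := by
      refine coeff_eq_zero_of_natDegree_lt ?_
      rw [hFdeg]; omega
    rw [this, mul_zero]
  have hG0 : G ≠ 0 := fun h => hchoose_ne (by rw [← hGcoeffd, h, coeff_zero])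
  have hGlead : G.leadingCoeff = (n.choose (n - d) : C) := by
    rw [Polynomial.leadingCoeff, hGdeg, hGcoeffd]
  have hGeval : ‖G.eval a‖ ≤ ε ^ d := by
    have h1 : G.eval a = (Polynomial.taylor a F).coeff (n - d) :=
      (Polynomial.taylor_coeff (r := a) (f := F) (n - d)).symm
    have h2 := htay (n - d) (by omega)
    rw [show n - (n - d) = d by omega] at h2
    rw [h1]; exact h2
  have hGsplit : Splits G := IsAlgClosed.splits G
  have hGcard : Multiset.card G.roots = d := by
    rw [← hGdeg]; exact splits_iff_card_roots.mp hGsplit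
  have hGprod : G = Polynomial.C G.leadingCoeff * (G.roots.map fun r => X - Polynomial.C r).prod :=
    hGsplit.eq_prod_roots
  have heval : ‖G.eval a‖
      = ‖(n.choose (n - d) : C)‖ * ((G.roots.map fun r => ‖a - r‖).prod) := by
    conv_lhs => rw [hGprod]
    rw [eval_mul, eval_C, norm_mul, hGlead]
    congr 1
    rw [eval_multiset_prod, Multiset.map_map, my_multiset_prod_norm, Multiset.map_map]
    apply congrArg
    apply Multiset.map_congr rfl
    intro r _
    show ‖Polynomial.eval a (X - Polynomial.C r)‖ = ‖a - r‖
    rw [eval_sub, eval_X, eval_C]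
  have hprodne : (G.roots.map fun r => ‖a - r‖) ≠ 0 := by
    intro h
    have := congrArg Multiset.card h
    rw [Multiset.card_map, hGcard] at this
    simp at this
    omega
  obtain ⟨u, hu_mem, hu⟩ := my_exists_pow_le_prod (G.roots.map fun r => ‖a - r‖) hprodne
    (fun x hx => by obtain ⟨r, _, rfl⟩ := Multiset.mem_map.mp hx; exact norm_nonneg _)
  obtain ⟨r₀, hr₀mem, hr₀⟩ := Multiset.mem_map.mp hu_mem
  have hgr : Polynomial.aeval r₀ g = 0 := by
    have h1 : G.eval r₀ = 0 := isRoot_of_mem_roots hr₀mem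
    rw [Polynomial.aeval_def, ← Polynomial.eval_map, hGg]
    exact h1
  have hg0 : g ≠ 0 := by
    intro h
    apply hG0
    rw [← hGg, h, Polynomial.map_zero]
  refine ⟨r₀, isAlgebraic_iff_isIntegral.mp ⟨g, hg0, hgr⟩, ?_, ?_⟩
  · have hdvd : minpoly K r₀ ∣ g := minpoly.dvd K r₀ hgr
    have h1 := Polynomial.natDegree_le_of_dvd hdvd hg0
    have h2 : g.natDegree = d := by
      rw [← natDegree_map_eq_of_injective (algebraMap K C).injective g, hGg, hGdeg]
    rw [h2] at h1
    exact h1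
  · have h1 : ‖a - r₀‖ ^ d ≤ (G.roots.map fun r => ‖a - r‖).prod := by
      have hcc : Multiset.card (G.roots.map fun r => ‖a - r‖) = d := by
        rw [Multiset.card_map, hGcard]
      rw [hcc] at hu
      have hbeta : u = ‖a - r₀‖ := by rw [← hr₀]
      rw [hbeta] at hu
      exact hu
    have hnormeq : ‖(n.choose d : K)‖ = ‖(n.choose (n - d) : C)‖ := by
      rw [Nat.choose_symm (le_of_lt hdn)]
      rw [show ((n.choose d : ℕ) : C) = algebraMap K C ((n.choose d : ℕ) : K) by
        rw [map_natCast], hKC]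
    calc ‖(n.choose d : K)‖ * ‖a - r₀‖ ^ d
        = ‖(n.choose (n - d) : C)‖ * ‖a - r₀‖ ^ d := by rw [hnormeq]
    _ ≤ ‖(n.choose (n - d) : C)‖ * (G.roots.map fun r => ‖a - r‖).prod :=
        mul_le_mul_of_nonneg_left h1 (norm_nonneg _)
    _ = ‖G.eval a‖ := heval.symm
    _ ≤ ε ^ d := hGeval

end AxStep2
section Bounds

noncomputable def myS (p : ℕ) (ℓ : ℕ) : ℝ :=
  ∑ j ∈ Finset.range ℓ, ((j : ℝ) + 1) / (p : ℝ) ^ j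

noncomputable def myB (t : ℝ) (p : ℕ) (ℓ : ℕ) : ℝ := t ^ (-(myS p ℓ))

lemma myS_nonneg {p : ℕ} (hp : 1 ≤ p) (ℓ : ℕ) : 0 ≤ myS p ℓ := by
  refine Finset.sum_nonneg fun j _ => ?_
  positivity

lemma myS_mono {p : ℕ} (hp : 1 ≤ p) {m ℓ : ℕ} (h : m ≤ ℓ) : myS p m ≤ myS p ℓ := by
  refine Finset.sum_le_sum_of_subset_of_nonneg (Finset.range_subset_range.mpr h) fun j _ _ => ?_
  positivity

lemma my_half_sum_le (ℓ : ℕ) :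
    ∑ j ∈ Finset.range ℓ, ((j : ℝ) + 1) * (1 / 2) ^ j ≤ 4 - (2 * ℓ + 4) * (1 / 2) ^ ℓ := by
  induction ℓ with
  | zero => norm_num
  | succ ℓ ih =>
    rw [Finset.sum_range_succ]
    have h1 : ((2 : ℝ) * (ℓ + 1) + 4) * (1 / 2) ^ (ℓ + 1) = ((ℓ : ℝ) + 3) * (1 / 2) ^ ℓ := by
      rw [pow_succ]; ring
    push_cast
    push_cast at ih
    rw [h1]
    have h2 : ((ℓ : ℝ) + 1) * (1 / 2) ^ ℓ + ((ℓ : ℝ) + 3) * (1 / 2) ^ ℓ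
        = (2 * (ℓ : ℝ) + 4) * (1 / 2) ^ ℓ := by ring
    linarith

lemma myS_le_four {p : ℕ} (hp : 2 ≤ p) (ℓ : ℕ) : myS p ℓ ≤ 4 := by
  have h1 : myS p ℓ ≤ ∑ j ∈ Finset.range ℓ, ((j : ℝ) + 1) * (1 / 2) ^ j := by
    refine Finset.sum_le_sum fun j _ => ?_
    rw [div_eq_mul_inv]
    refine mul_le_mul_of_nonneg_left ?_ (by positivity)
    rw [one_div, ← inv_pow]
    refine pow_le_pow_left₀ (by positivity) ?_ j
    rw [inv_le_inv₀ (by positivity) (by norm_num)]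
    exact_mod_cast hp
  refine h1.trans ((my_half_sum_le ℓ).trans ?_)
  have : (0 : ℝ) ≤ (2 * ℓ + 4) * (1 / 2) ^ ℓ := by positivity
  linarith

lemma myB_pos {t : ℝ} (ht0 : 0 < t) (p ℓ : ℕ) : 0 < myB t p ℓ :=
  Real.rpow_pos_of_pos ht0 _

lemma myB_ge_one {t : ℝ} (ht0 : 0 < t) (ht1 : t ≤ 1) {p : ℕ} (hp : 1 ≤ p) (ℓ : ℕ) :
    1 ≤ myB t p ℓ :=
  Real.one_le_rpow_of_pos_of_le_one_of_nonpos ht0 ht1 (neg_nonpos.mpr (myS_nonneg hp ℓ))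

lemma myB_mono {t : ℝ} (ht0 : 0 < t) (ht1 : t ≤ 1) {p : ℕ} (hp : 1 ≤ p) {m ℓ : ℕ}
    (h : m ≤ ℓ) : myB t p m ≤ myB t p ℓ :=
  Real.rpow_le_rpow_of_exponent_ge ht0 ht1 (neg_le_neg (myS_mono hp h))

lemma myB_rec {t : ℝ} (ht0 : 0 < t) (p m : ℕ) :
    myB t p m * t ^ (-(((m : ℝ) + 1) / (p : ℝ) ^ m)) = myB t p (m + 1) := by
  rw [myB, myB, ← Real.rpow_add ht0]
  congr 1
  rw [myS, myS, Finset.sum_range_succ]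
  ring

lemma myB_le {t : ℝ} (ht0 : 0 < t) (ht1 : t ≤ 1) {p : ℕ} (hp : 2 ≤ p) (ℓ : ℕ) :
    myB t p ℓ ≤ t ^ (-(4 : ℝ)) :=
  Real.rpow_le_rpow_of_exponent_ge ht0 ht1 (neg_le_neg (myS_le_four hp ℓ))

end Bounds
section Induction


variable {K C : Type*} [NontriviallyNormedField K] [CompleteSpace K] [CharZero K]
  [IsUltrametricDist K]
  [NontriviallyNormedField C] [NormedAlgebra K C] [CompleteSpace C] [IsAlgClosed C]

lemma my_ax_induction [IsUltrametricDist C]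
    (hKC : ∀ a : K, ‖algebraMap K C a‖ = ‖a‖)
    (halg : Dense {x : C | IsAlgebraic K x})
    {p : ℕ} (hp : p.Prime) (hpK : ‖(p : K)‖ < 1) :
    ∀ ℓ : ℕ, ∀ a : C, IsIntegral K a → (minpoly K a).natDegree ≤ p ^ ℓ →
    ∀ ε : ℝ, 0 ≤ ε → (∀ σ : C ≃ₐ[K] C, Isometry ⇑σ → ‖σ a - a‖ ≤ ε) →
    ∃ b : K, ‖a - algebraMap K C b‖ ≤ myB ‖(p : K)‖ p ℓ * ε := by
  have ht0 : (0 : ℝ) < ‖(p : K)‖ := by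
    rw [norm_pos_iff]
    exact_mod_cast hp.ne_zero
  have ht1 : ‖(p : K)‖ ≤ 1 := le_of_lt hpK
  have hp1 : 1 ≤ p := hp.one_lt.le
  intro ℓ
  induction ℓ using Nat.strong_induction_on with
  | _ ℓ IH =>
  intro a ha hdeg ε hε haut
  have hn1 : 0 < (minpoly K a).natDegree := minpoly.natDegree_pos ha
  rcases eq_or_lt_of_le (show 1 ≤ _ from hn1) with h1 | h2
  · -- degree one : a is in K already
    obtain ⟨b, hb⟩ := minpoly.natDegree_eq_one_iff.mp h1.symm
    refine ⟨b, ?_⟩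
    rw [hb, sub_self, norm_zero]
    exact mul_nonneg (le_of_lt (myB_pos ht0 p ℓ)) hε
  · set n := (minpoly K a).natDegree with hnn
    have h2n : 2 ≤ n := h2
    have hn0 : n - 1 ≠ 0 := by omega
    set m := Nat.log p (n - 1) with hm
    have hpm : p ^ m ≤ n - 1 := Nat.pow_log_le_self p hn0
    have hmn : n ≤ p ^ (m + 1) := by
      have h5 : n - 1 < p ^ (m + 1) := by
        rw [hm]
        exact Nat.lt_pow_succ_log_self hp.one_lt (n - 1)
      omega
    have hd1 : 1 ≤ p ^ m := Nat.one_le_pow _ _ hp.pos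
    have hdn : p ^ m < n := by omega
    have hml : m < ℓ := by
      have hpow : p ^ m < p ^ ℓ := by
        calc p ^ m ≤ n - 1 := hpm
        _ < n := by omega
        _ ≤ p ^ ℓ := hdeg
      exact (Nat.pow_lt_pow_iff_right hp.one_lt).mp hpow
    have hroots : ∀ a' : C, Polynomial.aeval a' (minpoly K a) = 0 → ‖a' - a‖ ≤ ε := by
      intro a' h_ev
      obtain ⟨σ, hiso, hσ⟩ := my_exists_conj halg ha h_ev
      rw [← hσ]
      exact haut σ hiso
    obtain ⟨b₁, hb₁int, hb₁deg, hb₁bound⟩ :=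
      my_ax_step hKC ha hnn.symm hd1 hdn hε hroots
    have hch : n.choose (p ^ m) ≠ 0 := (Nat.choose_pos (le_of_lt hdn)).ne'
    have hv : (n.choose (p ^ m)).factorization p ≤ m + 1 := by
      refine Nat.factorization_choose_le_log.trans ?_
      calc Nat.log p n ≤ Nat.log p (p ^ (m + 1)) := Nat.log_mono_right hmn
      _ = m + 1 := Nat.log_pow hp.one_lt _
    have hchnorm : ‖(p : K)‖ ^ (m + 1) ≤ ‖((n.choose (p ^ m) : ℕ) : K)‖ := by
      rw [my_norm_natCast_eq hp hpK hch]
      exact pow_le_pow_of_le_one (le_of_lt ht0) ht1 hv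
    set X := ε * ‖(p : K)‖ ^ (-(((m : ℝ) + 1) / (p : ℝ) ^ m)) with hX
    have hrpow1 : (1 : ℝ) ≤ ‖(p : K)‖ ^ (-(((m : ℝ) + 1) / (p : ℝ) ^ m)) :=
      Real.one_le_rpow_of_pos_of_le_one_of_nonpos ht0 ht1
        (neg_nonpos.mpr (by positivity))
    have hX0 : 0 ≤ X := mul_nonneg hε (by positivity)
    have hεX : ε ≤ X := by
      calc ε = ε * 1 := (mul_one ε).symm
      _ ≤ X := mul_le_mul_of_nonneg_left hrpow1 hε
    have hab₁ : ‖a - b₁‖ ≤ X := by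
      have h3 : ‖(p : K)‖ ^ (m + 1) * ‖a - b₁‖ ^ (p ^ m) ≤ ε ^ (p ^ m) :=
        le_trans (mul_le_mul_of_nonneg_right hchnorm
          (pow_nonneg (norm_nonneg _) _)) hb₁bound
      have hXd : X ^ (p ^ m) = ε ^ (p ^ m) * (‖(p : K)‖ ^ (m + 1))⁻¹ := by
        rw [hX, mul_pow]
        congr 1
        rw [← Real.rpow_natCast (‖(p : K)‖ ^ (-(((m : ℝ) + 1) / (p : ℝ) ^ m))) (p ^ m),
          ← Real.rpow_mul (le_of_lt ht0)]
        have he : (-(((m : ℝ) + 1) / (p : ℝ) ^ m)) * ((p ^ m : ℕ) : ℝ)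
            = -(((m : ℕ) + 1 : ℕ) : ℝ) := by
          have hpm0 : ((p : ℝ)) ^ m ≠ 0 := by positivity
          push_cast
          field_simp
        rw [he, Real.rpow_neg (le_of_lt ht0), Real.rpow_natCast]
      have h4 : ‖a - b₁‖ ^ (p ^ m) ≤ X ^ (p ^ m) := by
        rw [hXd, ← div_eq_mul_inv]
        exact (le_div_iff₀' (pow_pos ht0 _)).mpr h3
      exact le_of_pow_le_pow_left₀ (by positivity) hX0 h4
    have hXaut : ∀ σ : C ≃ₐ[K] C, Isometry ⇑σ → ‖σ b₁ - b₁‖ ≤ X := by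
      intro σ hiso
      have e1 : σ b₁ - b₁ = (σ b₁ - σ a) + ((σ a - a) + (a - b₁)) := by ring
      rw [e1]
      refine le_trans (IsUltrametricDist.norm_add_le_max _ _) (max_le ?_
        (le_trans (IsUltrametricDist.norm_add_le_max _ _) (max_le ?_ ?_)))
      · have hde : ‖σ b₁ - σ a‖ = ‖b₁ - a‖ := by
          rw [← dist_eq_norm, ← dist_eq_norm]
          exact hiso.dist_eq b₁ a
        rw [hde, norm_sub_rev]
        exact hab₁
      · exact (haut σ hiso).trans hεX
      · exact hab₁
    obtain ⟨b, hb⟩ := IH m hml b₁ hb₁int hb₁deg X hX0 hXaut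
    refine ⟨b, ?_⟩
    have hBmX : myB ‖(p : K)‖ p m * X ≤ myB ‖(p : K)‖ p ℓ * ε := by
      have e2 : myB ‖(p : K)‖ p m * X = myB ‖(p : K)‖ p (m + 1) * ε := by
        rw [hX, ← myB_rec ht0]
        ring
      rw [e2]
      exact mul_le_mul_of_nonneg_right (myB_mono ht0 ht1 hp1 (by omega)) hε
    have e3 : a - algebraMap K C b = (a - b₁) + (b₁ - algebraMap K C b) := by ring
    rw [e3]
    refine le_trans (IsUltrametricDist.norm_add_le_max _ _) (max_le ?_ (hb.trans hBmX))
    · refine hab₁.trans ?_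
      refine le_trans ?_ hBmX
      calc X = 1 * X := (one_mul X).symm
      _ ≤ myB ‖(p : K)‖ p m * X := mul_le_mul_of_nonneg_right (myB_ge_one ht0 ht1 hp1 m) hX0

end Induction
section AST

variable {K C : Type*} [NontriviallyNormedField K] [CompleteSpace K] [CharZero K]
  [IsUltrametricDist K]
  [NontriviallyNormedField C] [NormedAlgebra K C] [CompleteSpace C] [IsAlgClosed C]

lemma my_ultra_C (hKC : ∀ a : K, ‖algebraMap K C a‖ = ‖a‖) : IsUltrametricDist C := by
  refine IsUltrametricDist.isUltrametricDist_of_forall_norm_natCast_le_one ?_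
  intro n
  rw [show ((n : ℕ) : C) = algebraMap K C ((n : ℕ) : K) by rw [map_natCast], hKC]
  exact IsUltrametricDist.norm_natCast_le_one K n

lemma my_axSenTate (p : ℕ) (hp : p.Prime) (hpK : ‖(p : K)‖ < 1)
    (hKC : ∀ a : K, ‖algebraMap K C a‖ = ‖a‖)
    (halg : Dense {x : C | IsAlgebraic K x})
    (c : C) (hc : ∀ σ : C ≃ₐ[K] C, Continuous ⇑σ → σ c = c) :
    ∃ a : K, algebraMap K C a = c := by
  haveI : IsUltrametricDist C := my_ultra_C hKC
  have ht0 : (0 : ℝ) < ‖(p : K)‖ := by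
    rw [norm_pos_iff]
    exact_mod_cast hp.ne_zero
  have ht1 : ‖(p : K)‖ ≤ 1 := le_of_lt hpK
  have hiso : Isometry (algebraMap K C) :=
    AddMonoidHomClass.isometry_of_norm _ hKC
  have hclosed : IsClosed (Set.range ⇑(algebraMap K C)) :=
    hiso.isClosedEmbedding.isClosed_range
  have hmem : c ∈ closure (Set.range ⇑(algebraMap K C)) := by
    rw [Metric.mem_closure_iff]
    intro δ hδ
    set M := ‖(p : K)‖ ^ (-(4 : ℝ)) with hM
    have hM0 : 0 < M := Real.rpow_pos_of_pos ht0 _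
    have hM1 : 1 ≤ M :=
      Real.one_le_rpow_of_pos_of_le_one_of_nonpos ht0 ht1 (by norm_num)
    set δ' := δ / (2 * M) with hδ'def
    have hδ' : 0 < δ' := by positivity
    obtain ⟨a, haS, hdista⟩ := Metric.mem_closure_iff.mp (halg c) δ' hδ'
    have haint : IsIntegral K a := (haS : IsAlgebraic K a).isIntegral
    have hca : ‖c - a‖ < δ' := by rwa [← dist_eq_norm]
    have haut : ∀ σ : C ≃ₐ[K] C, Isometry ⇑σ → ‖σ a - a‖ ≤ δ' := by
      intro σ hσiso
      have hfix : σ c = c := hc σ hσiso.continuous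
      have e1 : σ a - a = (σ a - σ c) + (c - a) := by rw [hfix]; ring
      rw [e1]
      refine le_trans (IsUltrametricDist.norm_add_le_max _ _) (max_le ?_ (le_of_lt hca))
      have hde : ‖σ a - σ c‖ = ‖a - c‖ := by
        rw [← dist_eq_norm, ← dist_eq_norm]
        exact hσiso.dist_eq a c
      rw [hde, norm_sub_rev]
      exact le_of_lt hca
    have hdeg : (minpoly K a).natDegree ≤ p ^ ((minpoly K a).natDegree) :=
      (Nat.lt_pow_self hp.one_lt).le
    obtain ⟨b, hb⟩ := my_ax_induction hKC halg hp hpK ((minpoly K a).natDegree) a haint hdeg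
      δ' (le_of_lt hδ') haut
    refine ⟨algebraMap K C b, Set.mem_range_self b, ?_⟩
    have hBM : myB ‖(p : K)‖ p ((minpoly K a).natDegree) ≤ M := myB_le ht0 ht1 hp.two_le _
    have hMδ : myB ‖(p : K)‖ p ((minpoly K a).natDegree) * δ' ≤ M * δ' :=
      mul_le_mul_of_nonneg_right hBM (le_of_lt hδ')
    have e2 : c - algebraMap K C b = (c - a) + (a - algebraMap K C b) := by ring
    have h3 : dist c (algebraMap K C b) ≤ M * δ' := by
      rw [dist_eq_norm, e2]
      refine le_trans (IsUltrametricDist.norm_add_le_max _ _) (max_le ?_ (hb.trans hMδ))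
      calc ‖c - a‖ ≤ δ' := le_of_lt hca
      _ = 1 * δ' := (one_mul δ').symm
      _ ≤ M * δ' := mul_le_mul_of_nonneg_right hM1 (le_of_lt hδ')
    have h4 : M * δ' < δ := by
      rw [hδ'def]
      rw [show M * (δ / (2 * M)) = δ / 2 by field_simp]
      linarith
    exact lt_of_le_of_lt h3 h4
  exact hclosed.closure_subset hmem

end AST
open Topology in
/-- let `R` be a `K`-affinoid (or dagger) algebra over the complete
nonarchimedean field `K` of mixed characteristic, `C` the completed algebraic
closure of `K` (a complete algebraically closed nonarchimedean field isometrically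
extending `K` in which the algebraic elements are dense), and `R̂ = R ⊗̂_K C` the
completed base change, realized as a `C`-Banach space `W` with an isometric
embedding `ι : R → W` admitting a `K`-Schauder basis `w : ℕ → R`: every `x ∈ W` has
a unique convergent expansion `x = ∑ cᵢ • ι(wᵢ)` with `cᵢ ∈ C`, and elements of `R`
are exactly characterized below as those with coefficients in `K`.  The Galois
group `G = Gal(K̄/K)` (realized as the continuous `K`-algebra automorphisms of `C`)
acts coefficientwise on `W`, and the fixed points of `W` under `G` are exactly
`R`. -/
theorem stmt19 {K C R W : Type*}
    [NontriviallyNormedField K] [CompleteSpace K] [IsUltrametricDist K] [CharZero K]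
    (p : ℕ) (hp : p.Prime) (hpK : ‖(p : K)‖ < 1)
    [NontriviallyNormedField C] [NormedAlgebra K C] [CompleteSpace C]
    [IsAlgClosed C]
    (hKC : ∀ a : K, ‖algebraMap K C a‖ = ‖a‖)
    (halg : Dense {x : C | IsAlgebraic K x})
    [NormedCommRing R] [NormedAlgebra K R] [CompleteSpace R]
    -- `R` is of countable type over `K`
    (hct : ∃ D : Set R, D.Countable ∧ Dense (Submodule.span K D : Set R))
    [NormedAddCommGroup W] [NormedSpace C W] [CompleteSpace W]
    [NormedSpace K W] [IsScalarTower K C W]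
    (ι : R →ₗ[K] W) (hι : ∀ r : R, ‖ι r‖ = ‖r‖)
    (w : ℕ → R)
    -- `w` is a Schauder basis of `W` over `C`
    (hbasis : ∀ x : W, ∃! c : ℕ → C, HasSum (fun i => c i • ι (w i)) x)
    -- elements of `R` have expansion coefficients in `K`
    (hRcoeff : ∀ (r : R) (c : ℕ → C), HasSum (fun i => c i • ι (w i)) (ι r) →
      ∀ i, ∃ a : K, algebraMap K C a = c i) :
    ∀ x : W,
      (∀ σ : C ≃ₐ[K] C, Continuous σ → ∀ c : ℕ → C,
        HasSum (fun i => c i • ι (w i)) x →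
          HasSum (fun i => σ (c i) • ι (w i)) x) ↔ x ∈ Set.range ι := by
  intro x
  constructor
  · intro hfix
    obtain ⟨c, hc, huniq⟩ := hbasis x
    have hcoef : ∀ i, ∃ a : K, algebraMap K C a = c i := by
      intro i
      refine my_axSenTate p hp hpK hKC halg (c i) ?_
      intro σ hσ
      have h1 := hfix σ hσ c hc
      have h2 := huniq (fun i => σ (c i)) h1
      exact congrFun h2 i
    choose a ha using hcoef
    have hsmul : ∀ i, ι (a i • w i) = c i • ι (w i) := by
      intro i
      rw [map_smul, ← ha i]
      exact (algebraMap_smul C (a i) (ι (w i))).symm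
    have hsum : HasSum (fun i => ι (a i • w i)) x := by
      have : (fun i => ι (a i • w i)) = fun i => c i • ι (w i) := funext hsmul
      rw [this]
      exact hc
    have hiι : Isometry ⇑ι := AddMonoidHomClass.isometry_of_norm ι hι
    have hcs : CauchySeq (fun s : Finset ℕ => ∑ i ∈ s, ι (a i • w i)) :=
      Filter.Tendsto.cauchySeq hsum
    set g : Finset ℕ → R := fun s => ∑ i ∈ s, a i • w i with hg
    have hgs : (fun s : Finset ℕ => ι (g s)) = fun s : Finset ℕ => ∑ i ∈ s, ι (a i • w i) := by
      funext s
      simp [hg, map_sum]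
    have hcs2 : Cauchy (Filter.map ⇑ι (Filter.map g Filter.atTop)) := by
      rw [Filter.map_map]
      have h0 : (⇑ι ∘ g) = fun s : Finset ℕ => ∑ i ∈ s, ι (a i • w i) := hgs
      rw [h0]
      exact hcs
    have hcs3 : CauchySeq g := (hiι.isUniformInducing.cauchy_map_iff).mp hcs2
    obtain ⟨r, hr⟩ := cauchySeq_tendsto_of_complete hcs3
    refine ⟨r, ?_⟩
    have h5 : Filter.Tendsto (fun s : Finset ℕ => ι (g s)) Filter.atTop (𝓝 (ι r)) :=
      (hiι.continuous.tendsto r).comp hr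
    have h6 : Filter.Tendsto (fun s : Finset ℕ => ι (g s)) Filter.atTop (𝓝 x) := by
      rw [hgs]
      exact hsum
    exact tendsto_nhds_unique h5 h6
  · rintro ⟨r, rfl⟩ σ hσ c hc
    have hK := hRcoeff r c hc
    have hfixc : ∀ i, σ (c i) = c i := by
      intro i
      obtain ⟨b, hb⟩ := hK i
      rw [← hb]
      exact σ.commutes b
    have he : (fun i => σ (c i) • ι (w i)) = fun i => c i • ι (w i) := by
      funext i; rw [hfixc i]
    rw [he]
    exact hc
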